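/- Let u be continuous on (0,b] admitting a generalized Taylor expansion at 0 with exponent set A(u). Suppose α₀ = min{α ∈ A(u) \ {0} : a_α ≠ 0} satisfies α₀ ≥ 0, that 0 ∈ A(u), and a_0 ≠ 0. Then there exists a continuous function v on [0,b] such that u(x) = (1 + x^{α₀}) v(x) for all x ∈ (0,b]. -/

import Mathlib

open Set Finset
open Filter Topology

/-- A continuous function `u` on `(0,b]` admits a generalized Taylor expansion at `0`
with exponent set `A` (a discrete set bounded from below) and coefficients `a`:
for every `N` there is `C_N` with `|u x - ∑_{α ∈ A, α < N} a α x^α| ≤ C_N x^N` on `(0,b]`. -/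
def HasGTE (b : ℝ) (u : ℝ → ℂ) (A : Set ℝ) (a : ℝ → ℂ) : Prop :=
  BddBelow A ∧
  ∀ N : ℕ, ∃ (s : Finset ℝ) (C : ℝ), (↑s : Set ℝ) = A ∩ Set.Iio (N : ℝ) ∧
    ∀ x ∈ Set.Ioc (0 : ℝ) b,
      ‖u x - ∑ α ∈ s, a α * ((x ^ α : ℝ) : ℂ)‖ ≤ C * x ^ (N : ℝ)


/-- If `u` has a generalized Taylor expansion with `0 ∈ A(u)`, `a 0 ≠ 0`, and
`α₀ = min {α ∈ A(u) \ {0} : a α ≠ 0}` satisfies `α₀ ≥ 0`, then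
`u(x) = (1 + x^{α₀}) v(x)` for some `v` continuous on `[0,b]`. -/
theorem gte_factorization (b : ℝ) (hb : 0 < b) (u : ℝ → ℂ)
    (hu : ContinuousOn u (Set.Ioc 0 b))
    (A : Set ℝ) (a : ℝ → ℂ) (hg : HasGTE b u A a)
    (α₀ : ℝ) (hmin : IsLeast {α | α ∈ A ∧ α ≠ 0 ∧ a α ≠ 0} α₀)
    (hα₀ : 0 ≤ α₀) (h0A : (0 : ℝ) ∈ A) (ha0 : a 0 ≠ 0) :
    ∃ v : ℝ → ℂ, ContinuousOn v (Set.Icc 0 b) ∧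
      ∀ x ∈ Set.Ioc (0 : ℝ) b, u x = (1 + ((x ^ α₀ : ℝ) : ℂ)) * v x := by
  have hα0ne : α₀ ≠ 0 := hmin.1.2.1
  have hα0pos : 0 < α₀ := lt_of_le_of_ne hα₀ (Ne.symm hα0ne)
  set f : ℝ → ℂ := fun x => 1 + ((x ^ α₀ : ℝ) : ℂ) with hf
  have hfne : ∀ x : ℝ, 0 ≤ x → f x ≠ 0 := by
    intro x hx
    have h1 : (0:ℝ) ≤ x ^ α₀ := Real.rpow_nonneg hx _
    have h2 : f x = ((1 + x ^ α₀ : ℝ) : ℂ) := by simp [hf]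
    rw [h2]
    exact_mod_cast (by positivity : (1 + x ^ α₀ : ℝ) ≠ 0)
  have hfc : Continuous f := by
    apply Continuous.add continuous_const
    exact Complex.continuous_ofReal.comp (continuous_iff_continuousAt.2 fun x =>
      Real.continuousAt_rpow_const x α₀ (Or.inr hα₀))
  have hf0 : f 0 = 1 := by simp [hf, Real.zero_rpow hα0ne]
  -- limit of u at 0
  obtain ⟨s, C, hs, hbound⟩ := hg.2 1
  set S : ℝ → ℂ := fun x => ∑ α ∈ s, a α * ((x ^ α : ℝ) : ℂ) with hS
  have h0s : (0:ℝ) ∈ s := by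
    have : (0:ℝ) ∈ (↑s : Set ℝ) := by rw [hs]; exact ⟨h0A, by norm_num⟩
    exact_mod_cast this
  have hSlim : Tendsto S (𝓝[Set.Ioc (0:ℝ) b] 0) (𝓝 (a 0)) := by
    have key : Tendsto S (𝓝[Set.Ioc (0:ℝ) b] 0)
        (𝓝 (∑ α ∈ s, if α = 0 then a 0 else 0)) := by
      apply tendsto_finset_sum
      intro α hα
      by_cases h1 : α = 0
      · simp only [h1, if_pos]
        simpa [Real.rpow_zero] using (tendsto_const_nhds :
          Tendsto (fun _ : ℝ => a 0) (𝓝[Set.Ioc (0:ℝ) b] 0) (𝓝 (a 0)))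
      · rw [if_neg h1]
        by_cases h2 : a α = 0
        · simpa [h2] using (tendsto_const_nhds :
            Tendsto (fun _ : ℝ => (0:ℂ)) (𝓝[Set.Ioc (0:ℝ) b] 0) (𝓝 0))
        · have hαA : α ∈ A := by
            have : α ∈ (↑s : Set ℝ) := Finset.mem_coe.2 hα
            rw [hs] at this
            exact this.1
          have hge : α₀ ≤ α := hmin.2 ⟨hαA, h1, h2⟩
          have hpos : 0 < α := lt_of_lt_of_le hα0pos hge
          have h3 : Tendsto (fun x : ℝ => x ^ α) (𝓝 0) (𝓝 0) := by
            have := (Real.continuousAt_rpow_const 0 α (Or.inr hpos.le)).tendsto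
            rwa [Real.zero_rpow hpos.ne'] at this
          have h4 : Tendsto (fun x : ℝ => a α * ((x ^ α : ℝ) : ℂ)) (𝓝 0) (𝓝 0) := by
            have := (Complex.continuous_ofReal.tendsto 0).comp h3
            simpa using (tendsto_const_nhds.mul this : Tendsto
              (fun x : ℝ => a α * ((x ^ α : ℝ) : ℂ)) (𝓝 0) (𝓝 (a α * 0)))
          exact h4.mono_left nhdsWithin_le_nhds
    have hsum : (∑ α ∈ s, if α = 0 then a 0 else 0) = a 0 := by
      rw [Finset.sum_ite_eq' s (0:ℝ) (fun _ => a 0), if_pos h0s]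
    rwa [hsum] at key
  have hdiff : Tendsto (fun x => u x - S x) (𝓝[Set.Ioc (0:ℝ) b] 0) (𝓝 0) := by
    apply squeeze_zero_norm' (a := fun x : ℝ => C * x)
    · filter_upwards [self_mem_nhdsWithin] with x hx
      have := hbound x hx
      simpa [Real.rpow_natCast] using this
    · have : Tendsto (fun x : ℝ => C * x) (𝓝 0) (𝓝 (C * 0)) :=
        tendsto_const_nhds.mul tendsto_id
      simpa using this.mono_left nhdsWithin_le_nhds
  have hulim : Tendsto u (𝓝[Set.Ioc (0:ℝ) b] 0) (𝓝 (a 0)) := by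
    have := hdiff.add hSlim
    simpa using this
  refine ⟨fun x => if x = 0 then a 0 else u x / f x, ?_, ?_⟩
  · intro x hx
    rcases eq_or_ne x 0 with rfl | hx0
    · have hicc : Set.Icc (0:ℝ) b = insert 0 (Set.Ioc 0 b) :=
        (Set.Ioc_insert_left hb.le).symm
      have hq : Tendsto (fun y => u y / f y) (𝓝[Set.Ioc (0:ℝ) b] 0) (𝓝 (a 0)) := by
        have := hulim.div ((hfc.tendsto 0).mono_left nhdsWithin_le_nhds)
          (by rw [hf0]; exact one_ne_zero)
        rw [hf0, div_one] at this
        exact this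
      have hq' : Tendsto (fun y => if y = 0 then a 0 else u y / f y)
          (𝓝[Set.Ioc (0:ℝ) b] 0) (𝓝 (a 0)) := by
        apply hq.congr'
        filter_upwards [self_mem_nhdsWithin] with y hy
        rw [if_neg hy.1.ne']
      have : Tendsto (fun y => if y = 0 then a 0 else u y / f y)
          (𝓝[Set.Icc (0:ℝ) b] 0) (𝓝 (a 0)) := by
        rw [hicc, nhdsWithin_insert]
        rw [Filter.tendsto_sup]
        refine ⟨?_, hq'⟩
        rw [Filter.tendsto_pure_left]
        intro t ht
        simpa using mem_of_mem_nhds ht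
      simpa [ContinuousWithinAt] using this
    · have hx0' : 0 < x := lt_of_le_of_ne hx.1 (Ne.symm hx0)
      have heq : Set.Icc (0:ℝ) b ∩ Set.Ioi 0 = Set.Ioc 0 b := by
        ext y
        constructor
        · rintro ⟨⟨_, h2⟩, h3⟩; exact ⟨h3, h2⟩
        · rintro ⟨h1, h2⟩; exact ⟨⟨h1.le, h2⟩, h1⟩
      have hmem : Set.Ioc (0:ℝ) b ∈ 𝓝[Set.Icc (0:ℝ) b] x := by
        rw [← heq]
        exact inter_mem_nhdsWithin _ (Ioi_mem_nhds hx0')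
      have hw : ContinuousWithinAt (fun y => u y / f y) (Set.Ioc (0:ℝ) b) x :=
        (hu x ⟨hx0', hx.2⟩).div hfc.continuousWithinAt (hfne x hx.1)
      have hw' := hw.mono_of_mem_nhdsWithin hmem
      apply hw'.congr_of_eventuallyEq
      · filter_upwards [hmem] with y hy
        rw [if_neg hy.1.ne']
      · rw [if_neg hx0]
  · intro x hx
    show u x = (1 + ((x ^ α₀ : ℝ) : ℂ)) * (if x = 0 then a 0 else u x / f x)
    rw [if_neg hx.1.ne']
    rw [mul_comm, div_mul_cancel₀ _ (hfne x hx.1.le)]
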